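/- arXiv:1612.09082 — 2 statements merged into one kernel-verified Lean document; each statement's English description precedes it below -/
import Mathlib

section
/- Let k ∈ [0,1), let k* be the dual modulus with (k*)² = −k²/(1−k²), and let θ̄ ∈ (0,π/2). Then sc(θ̄·2K(k*)/π | k*) = √(1−k²) · sc(θ̄·2K(k)/π | k); equivalently, the quantity (1−k²)^{1/4}·sc(θ̄·2K(k)/π | k) is invariant under replacing k by k*. (This is the self-duality of the conductances ρ(θ̄|k) = sc(θ̄·2K(k)/π|k) of the Z-invariant massive Laplacian, the key identity behind the relation √(k*')·Δ^{m(k*)} = √(k')·Δ^{m(k)} showing that the massive harmonic functions for the dual moduli k and k* coincide.) -/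
open Real Filter Topology

/-- Complete elliptic integral of the first kind `K`, as a function of the
squared modulus `m = k²`. -/
noncomputable def ellK (m : ℝ) : ℝ :=
  ∫ τ in (0:ℝ)..(π/2), 1 / Real.sqrt (1 - m * Real.sin τ ^ 2)

/-- The incomplete elliptic integral of the first kind
`φ ↦ ∫₀^φ (1 - k² sin² t)^{-1/2} dt`, as a function of the squared modulus `m = k²`. -/
noncomputable def amF (m φ : ℝ) : ℝ :=
  ∫ t in (0:ℝ)..φ, 1 / Real.sqrt (1 - m * Real.sin t ^ 2)

/-- Jacobi's amplitude, the inverse of `amF m`, squared modulus `m = k²`. -/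
noncomputable def am (m u : ℝ) : ℝ := Function.invFun (amF m) u

/-- Jacobi elliptic function `sn`, squared modulus `m = k²`. -/
noncomputable def sn (u m : ℝ) : ℝ := Real.sin (am m u)

/-- Jacobi elliptic function `cn`, squared modulus `m = k²`. -/
noncomputable def cn (u m : ℝ) : ℝ := Real.cos (am m u)

/-- Jacobi elliptic function `dn`, squared modulus `m = k²`. -/
noncomputable def dn (u m : ℝ) : ℝ := Real.sqrt (1 - m * sn u m ^ 2)

/-- Jacobi elliptic function `sc = sn/cn`, squared modulus `m = k²`. -/
noncomputable def sc (u m : ℝ) : ℝ := sn u m / cn u m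

/- ### Auxiliary lemmas -/

lemma den_pos {m : ℝ} (hm : m < 1) (t : ℝ) : 0 < 1 - m * Real.sin t ^ 2 := by
  rcases le_or_gt m 0 with h | h
  · nlinarith [sq_nonneg (Real.sin t)]
  · nlinarith [Real.sin_sq_le_one t, sq_nonneg (Real.sin t)]

lemma cont_integrand {m : ℝ} (hm : m < 1) :
    Continuous fun t : ℝ => 1 / Real.sqrt (1 - m * Real.sin t ^ 2) := by
  apply Continuous.div continuous_const
  · exact Real.continuous_sqrt.comp (by continuity)
  · intro t
    exact (Real.sqrt_pos.mpr (den_pos hm t)).ne'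

lemma amF_hasDerivAt {m : ℝ} (hm : m < 1) (φ : ℝ) :
    HasDerivAt (amF m) (1 / Real.sqrt (1 - m * Real.sin φ ^ 2)) φ :=
  ((cont_integrand hm).integral_hasStrictDerivAt 0 φ).hasDerivAt

lemma amF_continuous {m : ℝ} (hm : m < 1) : Continuous (amF m) :=
  continuous_iff_continuousAt.2 fun u => (amF_hasDerivAt hm u).continuousAt

lemma amF_strictMono {m : ℝ} (hm : m < 1) : StrictMono (amF m) := by
  intro a b hab
  have hint : ∀ x y : ℝ, IntervalIntegrable
      (fun t => 1 / Real.sqrt (1 - m * Real.sin t ^ 2)) MeasureTheory.volume x y :=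
    fun x y => (cont_integrand hm).intervalIntegrable x y
  have h1 : amF m a + (∫ t in a..b, 1 / Real.sqrt (1 - m * Real.sin t ^ 2)) = amF m b :=
    intervalIntegral.integral_add_adjacent_intervals (hint 0 a) (hint a b)
  have h2 : 0 < ∫ t in a..b, 1 / Real.sqrt (1 - m * Real.sin t ^ 2) :=
    intervalIntegral.intervalIntegral_pos_of_pos (hint a b)
      (fun x => div_pos one_pos (Real.sqrt_pos.mpr (den_pos hm x))) hab
  linarith

lemma amF_zero (m : ℝ) : amF m 0 = 0 := intervalIntegral.integral_same

lemma amF_dual {m : ℝ} (hm0 : 0 ≤ m) (hm : m < 1) {φ : ℝ}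
    (hφ0 : 0 ≤ φ) (hφ : φ < π / 2) :
    amF (-m / (1 - m)) (Real.arctan (Real.sqrt (1 - m) * Real.tan φ))
      = Real.sqrt (1 - m) * amF m φ := by
  have hm1 : (0:ℝ) < 1 - m := by linarith
  set k' := Real.sqrt (1 - m) with hk'def
  have hk' : 0 < k' := Real.sqrt_pos.mpr hm1
  have hk'2 : k' ^ 2 = 1 - m := Real.sq_sqrt hm1.le
  have hms : -m / (1 - m) < 1 := by
    have h1 : -m / (1 - m) ≤ 0 := div_nonpos_of_nonpos_of_nonneg (by linarith) hm1.le
    linarith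
  -- the substitution function
  set f : ℝ → ℝ := fun t => Real.arctan (k' * Real.tan t) with hfdef
  have hcos : ∀ x ∈ Set.uIcc (0:ℝ) φ, 0 < Real.cos x := by
    intro x hx
    rw [Set.uIcc_of_le hφ0] at hx
    apply Real.cos_pos_of_mem_Ioo
    constructor
    · linarith [hx.1, Real.pi_pos]
    · exact lt_of_le_of_lt hx.2 hφ
  have hderiv : ∀ x ∈ Set.uIcc (0:ℝ) φ,
      HasDerivAt f (k' / (1 - m * Real.sin x ^ 2)) x := by
    intro x hx
    have hc := hcos x hx
    have h1 : HasDerivAt (fun t => k' * Real.tan t) (k' * (1 / Real.cos x ^ 2)) x :=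
      (Real.hasDerivAt_tan hc.ne').const_mul k'
    have h2 := (Real.hasDerivAt_arctan (k' * Real.tan x)).comp x h1
    refine h2.congr_deriv (Eq.symm ?_)
    have hD : 0 < 1 - m * Real.sin x ^ 2 := den_pos hm x
    have hsc : Real.sin x ^ 2 + Real.cos x ^ 2 = 1 := Real.sin_sq_add_cos_sq x
    rw [Real.tan_eq_sin_div_cos]
    have hCD : Real.cos x ^ 2 + k' ^ 2 * Real.sin x ^ 2 = 1 - m * Real.sin x ^ 2 := by
      rw [hk'2]; linear_combination hsc
    field_simp
    linear_combination hCD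
  have hderivcont : ContinuousOn (fun x => k' / (1 - m * Real.sin x ^ 2)) (Set.uIcc (0:ℝ) φ) := by
    apply ContinuousOn.div continuousOn_const (by fun_prop)
    intro x hx; exact (den_pos hm x).ne'
  have hg : Continuous fun s : ℝ => 1 / Real.sqrt (1 - (-m / (1 - m)) * Real.sin s ^ 2) :=
    cont_integrand hms
  have hsub := intervalIntegral.integral_comp_smul_deriv hderiv hderivcont hg
  have hf0 : f 0 = 0 := by simp [hfdef]
  rw [hfdef] at hsub
  simp only [Real.tan_zero, mul_zero, Real.arctan_zero] at hsub
  have key : amF (-m / (1 - m)) (Real.arctan (k' * Real.tan φ))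
      = ∫ x in (0:ℝ)..φ, (k' / (1 - m * Real.sin x ^ 2)) •
          ((fun s : ℝ => 1 / Real.sqrt (1 - (-m / (1 - m)) * Real.sin s ^ 2)) ∘
            (fun t => Real.arctan (k' * Real.tan t))) x := by
    rw [hsub]; rfl
  rw [key]
  rw [amF, ← intervalIntegral.integral_const_mul]
  apply intervalIntegral.integral_congr
  intro x hx
  have hc := hcos x hx
  have hD : 0 < 1 - m * Real.sin x ^ 2 := den_pos hm x
  have hsc : Real.sin x ^ 2 + Real.cos x ^ 2 = 1 := Real.sin_sq_add_cos_sq x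
  simp only [Function.comp_apply, smul_eq_mul]
  -- compute sin (arctan (k' tan x)) ^ 2
  have hy2 : (k' * Real.tan x) ^ 2 = (1 - m) * Real.sin x ^ 2 / Real.cos x ^ 2 := by
    rw [Real.tan_eq_sin_div_cos, mul_pow, hk'2, div_pow]; ring
  have h1y : 0 < 1 + (k' * Real.tan x) ^ 2 := by positivity
  have hsin2 : Real.sin (Real.arctan (k' * Real.tan x)) ^ 2
      = (1 - m) * Real.sin x ^ 2 / (1 - m * Real.sin x ^ 2) := by
    rw [Real.sin_arctan, div_pow, Real.sq_sqrt h1y.le, hy2]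
    have hc2 : Real.cos x ^ 2 ≠ 0 := by positivity
    field_simp
    linear_combination -(Real.sin x ^ 2) * hsc
  have h3 : 1 - -m / (1 - m) * Real.sin (Real.arctan (k' * Real.tan x)) ^ 2
      = 1 / (1 - m * Real.sin x ^ 2) := by
    rw [hsin2]; field_simp; ring
  rw [h3, one_div (1 - m * Real.sin x ^ 2), Real.sqrt_inv]
  have hsD : 0 < Real.sqrt (1 - m * Real.sin x ^ 2) := Real.sqrt_pos.mpr hD
  have hsD2 : Real.sqrt (1 - m * Real.sin x ^ 2) ^ 2 = 1 - m * Real.sin x ^ 2 :=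
    Real.sq_sqrt hD.le
  rw [one_div ((Real.sqrt (1 - m * Real.sin x ^ 2))⁻¹), inv_inv]
  field_simp
  linear_combination hsD2

lemma ellK_dual {m : ℝ} (hm0 : 0 ≤ m) (hm : m < 1) :
    ellK (-m / (1 - m)) = Real.sqrt (1 - m) * ellK m := by
  have hm1 : (0:ℝ) < 1 - m := by linarith
  have hk' : 0 < Real.sqrt (1 - m) := Real.sqrt_pos.mpr hm1
  have hms : -m / (1 - m) < 1 := by
    have h1 : -m / (1 - m) ≤ 0 := div_nonpos_of_nonpos_of_nonneg (by linarith) hm1.le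
    linarith
  have hellK : ellK (-m / (1 - m)) = amF (-m / (1 - m)) (π / 2) := rfl
  have hellK2 : ellK m = amF m (π / 2) := rfl
  -- tendsto of the substitution map
  have htan : Tendsto (fun φ : ℝ => Real.sqrt (1 - m) * Real.tan φ) (𝓝[<] (π / 2)) atTop :=
    Real.tendsto_tan_pi_div_two.const_mul_atTop hk'
  have harc : Tendsto (fun φ : ℝ => Real.arctan (Real.sqrt (1 - m) * Real.tan φ))
      (𝓝[<] (π / 2)) (𝓝 (π / 2)) :=
    (Real.tendsto_arctan_atTop.mono_right nhdsWithin_le_nhds).comp htan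
  have hF : Tendsto (fun φ : ℝ => amF (-m / (1 - m)) (Real.arctan (Real.sqrt (1 - m) * Real.tan φ)))
      (𝓝[<] (π / 2)) (𝓝 (amF (-m / (1 - m)) (π / 2))) :=
    ((amF_continuous hms).continuousAt).tendsto.comp harc
  have hG : Tendsto (fun φ : ℝ => Real.sqrt (1 - m) * amF m φ) (𝓝[<] (π / 2))
      (𝓝 (Real.sqrt (1 - m) * amF m (π / 2))) :=
    ((((amF_continuous hm).continuousAt).tendsto.mono_left nhdsWithin_le_nhds)).const_mul _
  have heq : ∀ᶠ φ in 𝓝[<] (π / 2),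
      amF (-m / (1 - m)) (Real.arctan (Real.sqrt (1 - m) * Real.tan φ))
        = Real.sqrt (1 - m) * amF m φ := by
    filter_upwards [Ioo_mem_nhdsLT_of_mem
      (Set.mem_Ioc.mpr ⟨by positivity, le_rfl⟩ : π / 2 ∈ Set.Ioc (0:ℝ) (π / 2))] with φ hφ
    exact amF_dual hm0 hm hφ.1.le hφ.2
  rw [hellK, hellK2]
  exact tendsto_nhds_unique (hF.congr' heq) hG

/-- Self-duality of the conductances of the Z-invariant massive Laplacian:
for `k ∈ [0,1)`, dual squared modulus `(k*)² = -k²/(1-k²)` and `θ̄ ∈ (0,π/2)`,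
`sc(θ̄·2K(k*)/π | k*) = √(1-k²) · sc(θ̄·2K(k)/π | k)`. -/
theorem conductance_self_duality (k θbar : ℝ)
    (hk : k ∈ Set.Ico (0 : ℝ) 1) (hθ : θbar ∈ Set.Ioo 0 (π / 2)) :
    sc (θbar * (2 * ellK (-k ^ 2 / (1 - k ^ 2))) / π) (-k ^ 2 / (1 - k ^ 2))
      = Real.sqrt (1 - k ^ 2) * sc (θbar * (2 * ellK (k ^ 2)) / π) (k ^ 2) := by
  obtain ⟨hk0, hk1⟩ := hk
  obtain ⟨hθ0, hθ1⟩ := hθ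
  set m := k ^ 2 with hmdef
  have hm0 : 0 ≤ m := sq_nonneg k
  have hm : m < 1 := by nlinarith
  have hm1 : (0:ℝ) < 1 - m := by linarith
  have hk' : 0 < Real.sqrt (1 - m) := Real.sqrt_pos.mpr hm1
  have hms : -m / (1 - m) < 1 := by
    have h1 : -m / (1 - m) ≤ 0 := div_nonpos_of_nonpos_of_nonneg (by linarith) hm1.le
    linarith
  have hellK2 : ellK m = amF m (π / 2) := rfl
  have hKpos : 0 < ellK m := by
    rw [hellK2, ← amF_zero m]
    exact amF_strictMono hm (by positivity)
  set u := θbar * (2 * ellK m) / π with hudef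
  have hu0 : 0 < u := by
    apply div_pos _ Real.pi_pos
    positivity
  have hu1 : u < ellK m := by
    rw [hudef, div_lt_iff₀ Real.pi_pos]
    nlinarith [Real.pi_pos]
  -- find the amplitude φ with amF m φ = u
  obtain ⟨φ, hφmem, hφeq⟩ : ∃ φ ∈ Set.Ioo (0:ℝ) (π / 2), amF m φ = u := by
    have hsub := intermediate_value_Ioo (by positivity : (0:ℝ) ≤ π / 2)
      ((amF_continuous hm).continuousOn)
    have hmem : u ∈ Set.Ioo (amF m 0) (amF m (π / 2)) := by
      rw [amF_zero, ← hellK2]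
      exact ⟨hu0, hu1⟩
    obtain ⟨φ, hφ, hφeq⟩ := hsub hmem
    exact ⟨φ, hφ, hφeq⟩
  have hinj : Function.Injective (amF m) := (amF_strictMono hm).injective
  have hinjs : Function.Injective (amF (-m / (1 - m))) := (amF_strictMono hms).injective
  have ham : am m u = φ := by
    rw [am, ← hφeq]
    exact Function.leftInverse_invFun hinj φ
  have hdualK : ellK (-m / (1 - m)) = Real.sqrt (1 - m) * ellK m := ellK_dual hm0 hm
  have hv : θbar * (2 * ellK (-m / (1 - m))) / π = Real.sqrt (1 - m) * u := by
    rw [hdualK, hudef]; ring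
  have hamdual : amF (-m / (1 - m)) (Real.arctan (Real.sqrt (1 - m) * Real.tan φ))
      = Real.sqrt (1 - m) * u := by
    rw [amF_dual hm0 hm hφmem.1.le hφmem.2, hφeq]
  have hams : am (-m / (1 - m)) (Real.sqrt (1 - m) * u)
      = Real.arctan (Real.sqrt (1 - m) * Real.tan φ) := by
    rw [am, ← hamdual]
    exact Function.leftInverse_invFun hinjs _
  have hgoal1 : -k ^ 2 / (1 - k ^ 2) = -m / (1 - m) := by rw [hmdef]
  rw [hgoal1, hv]
  rw [sc, sc, sn, sn, cn, cn, hams, ham]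
  rw [← Real.tan_eq_sin_div_cos, ← Real.tan_eq_sin_div_cos, Real.tan_arctan]
end

section
/- Let k satisfy 0 < k² < 1. For all real numbers u and v, the function H satisfies the addition formula H(v−u | k) = H(v|k) − H(u|k) + (k²·K'/π) · sn(u/2 | k) · sn(v/2 | k) · sn((v−u)/2 | k). -/
open Real Filter

/-- Jacobi's epsilon function `E(u|k) = ∫₀ᵘ dn(v|k)² dv`, squared modulus `m = k²`. -/
noncomputable def jacobiEps (m u : ℝ) : ℝ := ∫ v in (0:ℝ)..u, (dn v m) ^ 2

/-- The function `H(u|k) = (K'/π)(E(u/2|k) + ((E'-K')/K')·(u/2))`, where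
`k' = √(1-k²)`, `K' = K(k')`, `E' = E(K'|k')`. -/
noncomputable def Hh (k u : ℝ) : ℝ :=
  (ellK (1 - k^2) / π) *
    (jacobiEps (k^2) (u/2) +
      ((jacobiEps (1 - k^2) (ellK (1 - k^2)) - ellK (1 - k^2)) / ellK (1 - k^2)) * (u/2))

open MeasureTheory intervalIntegral

section
variable {m : ℝ}

lemma aux_pos (hm0 : 0 ≤ m) (hm1 : m < 1) (t : ℝ) : 0 < 1 - m * Real.sin t ^ 2 := by
  nlinarith [Real.sin_sq_le_one t, sq_nonneg (Real.sin t)]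

lemma contF (hm0 : 0 ≤ m) (hm1 : m < 1) :
    Continuous (fun t => 1 / Real.sqrt (1 - m * Real.sin t ^ 2)) := by
  apply continuous_const.div
  · exact Real.continuous_sqrt.comp (by continuity)
  · exact fun t => ne_of_gt (Real.sqrt_pos.2 (aux_pos hm0 hm1 t))

lemma one_le_F (hm0 : 0 ≤ m) (hm1 : m < 1) (t : ℝ) :
    1 ≤ 1 / Real.sqrt (1 - m * Real.sin t ^ 2) := by
  have h1 : Real.sqrt (1 - m * Real.sin t ^ 2) ≤ 1 := by
    rw [Real.sqrt_le_one]; nlinarith [sq_nonneg (Real.sin t)]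
  have h2 : 0 < Real.sqrt (1 - m * Real.sin t ^ 2) := Real.sqrt_pos.2 (aux_pos hm0 hm1 t)
  rw [le_div_iff₀ h2]
  linarith

lemma hasDerivAt_amF (hm0 : 0 ≤ m) (hm1 : m < 1) (φ : ℝ) :
    HasDerivAt (amF m) (1 / Real.sqrt (1 - m * Real.sin φ ^ 2)) φ :=
  intervalIntegral.integral_hasDerivAt_right
    ((contF hm0 hm1).intervalIntegrable _ _)
    ((contF hm0 hm1).stronglyMeasurableAtFilter _ _)
    (contF hm0 hm1).continuousAt

lemma strictMono_amF (hm0 : 0 ≤ m) (hm1 : m < 1) : StrictMono (amF m) := by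
  apply strictMono_of_deriv_pos
  intro x
  rw [(hasDerivAt_amF hm0 hm1 x).deriv]
  linarith [one_le_F hm0 hm1 x]

lemma continuous_amF (hm0 : 0 ≤ m) (hm1 : m < 1) : Continuous (amF m) :=
  Differentiable.continuous (fun x => (hasDerivAt_amF hm0 hm1 x).differentiableAt)
lemma amF_ge (hm0 : 0 ≤ m) (hm1 : m < 1) {φ : ℝ} (h : 0 ≤ φ) : φ ≤ amF m φ := by
  have := intervalIntegral.integral_mono_on (μ := volume) h
    (_root_.intervalIntegrable_const (c := (1:ℝ))) ((contF hm0 hm1).intervalIntegrable _ _)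
    (fun x _ => one_le_F hm0 hm1 x)
  simpa [amF] using this

lemma amF_le (hm0 : 0 ≤ m) (hm1 : m < 1) {φ : ℝ} (h : φ ≤ 0) : amF m φ ≤ φ := by
  have h1 := intervalIntegral.integral_mono_on (μ := volume) h
    (_root_.intervalIntegrable_const (c := (1:ℝ))) ((contF hm0 hm1).intervalIntegrable _ _)
    (fun x _ => one_le_F hm0 hm1 x)
  have h2 : amF m φ = -∫ t in φ..(0:ℝ), 1 / Real.sqrt (1 - m * Real.sin t ^ 2) := by
    rw [amF, intervalIntegral.integral_symm]
  simp only [intervalIntegral.integral_const, smul_eq_mul, mul_one] at h1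
  linarith

lemma surj_amF (hm0 : 0 ≤ m) (hm1 : m < 1) : Function.Surjective (amF m) := by
  apply (continuous_amF hm0 hm1).surjective
  · apply tendsto_atTop_mono' atTop _ tendsto_id
    filter_upwards [eventually_ge_atTop (0:ℝ)] with φ hφ
    exact amF_ge hm0 hm1 hφ
  · apply tendsto_atBot_mono' atBot _ tendsto_id
    filter_upwards [eventually_le_atBot (0:ℝ)] with φ hφ
    exact amF_le hm0 hm1 hφ

lemma amF_am (hm0 : 0 ≤ m) (hm1 : m < 1) (u : ℝ) : amF m (am m u) = u :=
  Function.rightInverse_invFun (surj_amF hm0 hm1) u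

lemma am_amF (hm0 : 0 ≤ m) (hm1 : m < 1) (φ : ℝ) : am m (amF m φ) = φ :=
  Function.leftInverse_invFun (strictMono_amF hm0 hm1).injective φ

lemma continuous_am (hm0 : 0 ≤ m) (hm1 : m < 1) : Continuous (am m) := by
  have h : am m = ⇑(StrictMono.orderIsoOfSurjective _ (strictMono_amF hm0 hm1)
      (surj_amF hm0 hm1)).symm := by
    funext u
    apply (strictMono_amF hm0 hm1).injective
    rw [amF_am hm0 hm1]
    exact (StrictMono.orderIsoOfSurjective_self_symm_apply (amF m)
      (strictMono_amF hm0 hm1) (surj_amF hm0 hm1) u).symm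
  rw [h]
  exact OrderIso.continuous _

lemma hasDerivAt_am (hm0 : 0 ≤ m) (hm1 : m < 1) (u : ℝ) :
    HasDerivAt (am m) (Real.sqrt (1 - m * Real.sin (am m u) ^ 2)) u := by
  have hs : 0 < Real.sqrt (1 - m * Real.sin (am m u) ^ 2) :=
    Real.sqrt_pos.2 (aux_pos hm0 hm1 _)
  have h := HasDerivAt.of_local_left_inverse ((continuous_am hm0 hm1).continuousAt)
    (hasDerivAt_amF hm0 hm1 (am m u))
    (by positivity) (Eventually.of_forall (amF_am hm0 hm1))
  rw [one_div, inv_inv] at h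
  exact h
lemma sn_sq_add_cn_sq (u : ℝ) : sn u m ^ 2 + cn u m ^ 2 = 1 := Real.sin_sq_add_cos_sq _

lemma sn_sq_le_one (u : ℝ) : sn u m ^ 2 ≤ 1 := Real.sin_sq_le_one _

lemma dn_arg_pos (hm0 : 0 ≤ m) (hm1 : m < 1) (u : ℝ) : 0 < 1 - m * sn u m ^ 2 :=
  aux_pos hm0 hm1 (am m u)

lemma dn_pos (hm0 : 0 ≤ m) (hm1 : m < 1) (u : ℝ) : 0 < dn u m :=
  Real.sqrt_pos.2 (dn_arg_pos hm0 hm1 u)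

lemma dn_sq (hm0 : 0 ≤ m) (hm1 : m < 1) (u : ℝ) : dn u m ^ 2 = 1 - m * sn u m ^ 2 :=
  Real.sq_sqrt (dn_arg_pos hm0 hm1 u).le

lemma hasDerivAt_sn (hm0 : 0 ≤ m) (hm1 : m < 1) (u : ℝ) :
    HasDerivAt (fun x => sn x m) (cn u m * dn u m) u := by
  have h := (Real.hasDerivAt_sin (am m u)).comp u (hasDerivAt_am hm0 hm1 u)
  exact h

lemma hasDerivAt_cn (hm0 : 0 ≤ m) (hm1 : m < 1) (u : ℝ) :
    HasDerivAt (fun x => cn x m) (-(sn u m * dn u m)) u := by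
  have h := (Real.hasDerivAt_cos (am m u)).comp u (hasDerivAt_am hm0 hm1 u)
  rw [neg_mul] at h
  exact h

lemma hasDerivAt_dn (hm0 : 0 ≤ m) (hm1 : m < 1) (u : ℝ) :
    HasDerivAt (fun x => dn x m) (-(m * sn u m * cn u m)) u := by
  have hinner : HasDerivAt (fun x => 1 - m * sn x m ^ 2)
      (-(m * (2 * sn u m ^ 1 * (cn u m * dn u m)))) u :=
    HasDerivAt.const_sub 1 (((hasDerivAt_sn hm0 hm1 u).pow 2).const_mul m)
  have h := (Real.hasDerivAt_sqrt (ne_of_gt (dn_arg_pos hm0 hm1 u))).comp u hinner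
  have hdn : Real.sqrt (1 - m * sn u m ^ 2) = dn u m := rfl
  have hne : dn u m ≠ 0 := ne_of_gt (dn_pos hm0 hm1 u)
  refine h.congr_deriv (Eq.symm ?_)
  rw [hdn]
  field_simp

lemma continuous_sn (hm0 : 0 ≤ m) (hm1 : m < 1) : Continuous (fun x => sn x m) :=
  Real.continuous_sin.comp (continuous_am hm0 hm1)

lemma continuous_dn (hm0 : 0 ≤ m) (hm1 : m < 1) : Continuous (fun x => dn x m) :=
  Real.continuous_sqrt.comp
    (continuous_const.sub (continuous_const.mul ((continuous_sn hm0 hm1).pow 2)))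

lemma hasDerivAt_eps (hm0 : 0 ≤ m) (hm1 : m < 1) (u : ℝ) :
    HasDerivAt (jacobiEps m) (dn u m ^ 2) u :=
  intervalIntegral.integral_hasDerivAt_right
    (((continuous_dn hm0 hm1).pow 2).intervalIntegrable _ _)
    (((continuous_dn hm0 hm1).pow 2).stronglyMeasurableAtFilter _ _)
    ((continuous_dn hm0 hm1).pow 2).continuousAt

lemma am_zero (hm0 : 0 ≤ m) (hm1 : m < 1) : am m 0 = 0 := by
  have h := am_amF hm0 hm1 0
  rwa [show amF m 0 = 0 from intervalIntegral.integral_same] at h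

lemma sn_zero (hm0 : 0 ≤ m) (hm1 : m < 1) : sn 0 m = 0 := by
  rw [sn, am_zero hm0 hm1, Real.sin_zero]

lemma cn_zero (hm0 : 0 ≤ m) (hm1 : m < 1) : cn 0 m = 1 := by
  rw [cn, am_zero hm0 hm1, Real.cos_zero]

lemma dn_zero (hm0 : 0 ≤ m) (hm1 : m < 1) : dn 0 m = 1 := by
  rw [dn, sn_zero hm0 hm1]
  simp

lemma eps_zero : jacobiEps m 0 = 0 := intervalIntegral.integral_same

lemma D_pos (hm0 : 0 ≤ m) (hm1 : m < 1) (a b : ℝ) :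
    0 < 1 - m * sn a m ^ 2 * sn b m ^ 2 := by
  have h1 : m * sn a m ^ 2 ≤ m :=
    (mul_le_of_le_one_right hm0 (sn_sq_le_one a))
  have h2 : m * sn a m ^ 2 * sn b m ^ 2 ≤ m * sn a m ^ 2 :=
    mul_le_of_le_one_right (by positivity) (sn_sq_le_one b)
  linarith
lemma key_id (hm0 : 0 ≤ m) (hm1 : m < 1) (a b : ℝ) :
    (sn a m * cn b m * dn b m + sn b m * cn a m * dn a m) *
      (cn a m * dn a m * sn b m - sn a m * cn b m * dn b m) =
    (sn b m ^ 2 - sn a m ^ 2) * (1 - m * sn a m ^ 2 * sn b m ^ 2) := by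
  have hca : cn a m ^ 2 = 1 - sn a m ^ 2 := by linarith [sn_sq_add_cn_sq (m := m) a]
  have hcb : cn b m ^ 2 = 1 - sn b m ^ 2 := by linarith [sn_sq_add_cn_sq (m := m) b]
  have hda := dn_sq hm0 hm1 a
  have hdb := dn_sq hm0 hm1 b
  linear_combination (sn b m ^ 2 * dn a m ^ 2) * hca + (sn b m ^ 2 * (1 - sn a m ^ 2)) * hda -
    (sn a m ^ 2 * dn b m ^ 2) * hcb - (sn a m ^ 2 * (1 - sn b m ^ 2)) * hdb

lemma sn_add (hm0 : 0 ≤ m) (hm1 : m < 1) (a b : ℝ) :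
    sn (a + b) m * (1 - m * sn a m ^ 2 * sn b m ^ 2) =
      sn a m * cn b m * dn b m + sn b m * cn a m * dn a m := by
  set s := a + b with hs
  set g : ℝ → ℝ := fun x =>
    (sn x m * cn (s - x) m * dn (s - x) m + sn (s - x) m * cn x m * dn x m) /
      (1 - m * sn x m ^ 2 * sn (s - x) m ^ 2) with hgdef
  have hg : ∀ x : ℝ, HasDerivAt g 0 x := by
    intro x
    have hlin : HasDerivAt (fun y : ℝ => s - y) (-1) x := by
      simpa using (hasDerivAt_id x).const_sub s
    have hsb : HasDerivAt (fun y => sn (s - y) m) (-(cn (s - x) m * dn (s - x) m)) x := by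
      have := (hasDerivAt_sn hm0 hm1 (s - x)).comp x hlin
      exact this.congr_deriv (by ring)
    have hcb : HasDerivAt (fun y => cn (s - y) m) (sn (s - x) m * dn (s - x) m) x := by
      have := (hasDerivAt_cn hm0 hm1 (s - x)).comp x hlin
      exact this.congr_deriv (by ring)
    have hdb : HasDerivAt (fun y => dn (s - y) m) (m * sn (s - x) m * cn (s - x) m) x := by
      have := (hasDerivAt_dn hm0 hm1 (s - x)).comp x hlin
      exact this.congr_deriv (by ring)
    have hsa := hasDerivAt_sn hm0 hm1 x
    have hca := hasDerivAt_cn hm0 hm1 x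
    have hda := hasDerivAt_dn hm0 hm1 x
    have hN : HasDerivAt
        (fun y => sn y m * cn (s - y) m * dn (s - y) m + sn (s - y) m * cn y m * dn y m)
        (2 * m * sn x m * sn (s - x) m * (sn x m ^ 2 - sn (s - x) m ^ 2)) x := by
      have h := ((hsa.mul hcb).mul hdb).add ((hsb.mul hca).mul hda)
      refine h.congr_deriv (Eq.symm ?_)
      simp only [Pi.mul_apply]
      have pca : cn x m ^ 2 = 1 - sn x m ^ 2 := by linarith [sn_sq_add_cn_sq (m := m) x]
      have pcb : cn (s - x) m ^ 2 = 1 - sn (s - x) m ^ 2 := by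
        linarith [sn_sq_add_cn_sq (m := m) (s - x)]
      have pda := dn_sq hm0 hm1 x
      have pdb := dn_sq hm0 hm1 (s - x)
      linear_combination (sn x m * sn (s - x) m) * pda + (m * sn x m * sn (s - x) m) * pca -
        (sn x m * sn (s - x) m) * pdb - (m * sn x m * sn (s - x) m) * pcb
    have hD : HasDerivAt (fun y => 1 - m * sn y m ^ 2 * sn (s - y) m ^ 2)
        (-(2 * m * sn x m * sn (s - x) m *
          (cn x m * dn x m * sn (s - x) m - sn x m * cn (s - x) m * dn (s - x) m))) x := by
      have h : HasDerivAt (fun y => m * sn y m ^ 2 * sn (s - y) m ^ 2) _ x :=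
        (((hsa.pow 2).const_mul m).mul (hsb.pow 2))
      have h2 := h.const_sub 1
      refine h2.congr_deriv (Eq.symm ?_)
      simp only [Pi.pow_apply]
      ring
    have hDne : (1 - m * sn x m ^ 2 * sn (s - x) m ^ 2) ≠ 0 :=
      ne_of_gt (D_pos hm0 hm1 x (s - x))
    have h := hN.div hD hDne
    refine h.congr_deriv (Eq.symm ?_)
    rw [eq_comm, div_eq_zero_iff]
    left
    linear_combination (2 * m * sn x m * sn (s - x) m) * key_id hm0 hm1 x (s - x)
  have hconst : g a = g 0 :=
    is_const_of_deriv_eq_zero (fun x => (hg x).differentiableAt) (fun x => (hg x).deriv) a 0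
  have hg0 : g 0 = sn s m := by
    rw [hgdef]
    simp only [sub_zero, sn_zero hm0 hm1, cn_zero hm0 hm1, dn_zero hm0 hm1]
    norm_num
  have hga : g a = (sn a m * cn b m * dn b m + sn b m * cn a m * dn a m) /
      (1 - m * sn a m ^ 2 * sn b m ^ 2) := by
    rw [hgdef]
    simp only [hs, add_sub_cancel_left]
  have hDne : (1 - m * sn a m ^ 2 * sn b m ^ 2) ≠ 0 := ne_of_gt (D_pos hm0 hm1 a b)
  rw [hga, hg0] at hconst
  rw [div_eq_iff hDne] at hconst
  linarith [hconst]
lemma eps_add (hm0 : 0 ≤ m) (hm1 : m < 1) (a b : ℝ) :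
    jacobiEps m (a + b) =
      jacobiEps m a + jacobiEps m b - m * sn a m * sn b m * sn (a + b) m := by
  set s := a + b with hs
  set F : ℝ → ℝ := fun x =>
    jacobiEps m x + jacobiEps m (s - x) - m * sn x m * sn (s - x) m * sn s m with hFdef
  have hF : ∀ x : ℝ, HasDerivAt F 0 x := by
    intro x
    have hlin : HasDerivAt (fun y : ℝ => s - y) (-1) x := by
      simpa using (hasDerivAt_id x).const_sub s
    have hsb : HasDerivAt (fun y => sn (s - y) m) (-(cn (s - x) m * dn (s - x) m)) x := by
      have := (hasDerivAt_sn hm0 hm1 (s - x)).comp x hlin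
      exact this.congr_deriv (by ring)
    have heb : HasDerivAt (fun y => jacobiEps m (s - y)) (-(dn (s - x) m ^ 2)) x := by
      have := (hasDerivAt_eps hm0 hm1 (s - x)).comp x hlin
      exact this.congr_deriv (by ring)
    have h1 : HasDerivAt (fun y => m * sn y m) (m * (cn x m * dn x m)) x :=
      (hasDerivAt_sn hm0 hm1 x).const_mul m
    have hprod : HasDerivAt (fun y => m * sn y m * sn (s - y) m * sn s m)
        ((m * (cn x m * dn x m) * sn (s - x) m +
          m * sn x m * -(cn (s - x) m * dn (s - x) m)) * sn s m) x :=
      (h1.mul hsb).mul_const (sn s m)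
    have hDne : (1 - m * sn x m ^ 2 * sn (s - x) m ^ 2) ≠ 0 :=
      ne_of_gt (D_pos hm0 hm1 x (s - x))
    have hsadd := sn_add hm0 hm1 x (s - x)
    rw [show x + (s - x) = s by ring] at hsadd
    have hkey := key_id hm0 hm1 x (s - x)
    have hQ : sn s m * (cn x m * dn x m * sn (s - x) m - sn x m * cn (s - x) m * dn (s - x) m)
        = sn (s - x) m ^ 2 - sn x m ^ 2 := by
      apply mul_right_cancel₀ hDne
      calc sn s m * (cn x m * dn x m * sn (s - x) m - sn x m * cn (s - x) m * dn (s - x) m) *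
            (1 - m * sn x m ^ 2 * sn (s - x) m ^ 2)
          = (cn x m * dn x m * sn (s - x) m - sn x m * cn (s - x) m * dn (s - x) m) *
            (sn s m * (1 - m * sn x m ^ 2 * sn (s - x) m ^ 2)) := by ring
        _ = (cn x m * dn x m * sn (s - x) m - sn x m * cn (s - x) m * dn (s - x) m) *
            (sn x m * cn (s - x) m * dn (s - x) m + sn (s - x) m * cn x m * dn x m) := by
            rw [hsadd]
        _ = (sn (s - x) m ^ 2 - sn x m ^ 2) * (1 - m * sn x m ^ 2 * sn (s - x) m ^ 2) := by
            linear_combination hkey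
    have h := ((hasDerivAt_eps hm0 hm1 x).add heb).sub hprod
    refine h.congr_deriv (Eq.symm ?_)
    have pda := dn_sq hm0 hm1 x
    have pdb := dn_sq hm0 hm1 (s - x)
    linear_combination -pda + pdb + m * hQ
  have hconst : F a = F 0 :=
    is_const_of_deriv_eq_zero (fun x => (hF x).differentiableAt) (fun x => (hF x).deriv) a 0
  have hF0 : F 0 = jacobiEps m s := by
    rw [hFdef]
    simp only [sub_zero, sn_zero hm0 hm1, eps_zero]
    ring
  have hFa : F a = jacobiEps m a + jacobiEps m b - m * sn a m * sn b m * sn s m := by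
    rw [hFdef]
    simp only [hs, add_sub_cancel_left]
  rw [hFa, hF0] at hconst
  linarith
end

/-- Addition formula for `H`:
`H(v-u) = H(v) - H(u) + (k²K'/π) sn(u/2) sn(v/2) sn((v-u)/2)`. -/
theorem Hh_addition_formula (k : ℝ) (h0 : 0 < k ^ 2) (h1 : k ^ 2 < 1) (u v : ℝ) :
    Hh k (v - u) = Hh k v - Hh k u +
      (k ^ 2 * ellK (1 - k ^ 2) / π) *
        sn (u / 2) (k ^ 2) * sn (v / 2) (k ^ 2) * sn ((v - u) / 2) (k ^ 2) := by
  have hm0 : (0:ℝ) ≤ k ^ 2 := sq_nonneg k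
  have key := eps_add hm0 h1 (u / 2) ((v - u) / 2)
  rw [show u / 2 + (v - u) / 2 = v / 2 by ring] at key
  simp only [Hh]
  linear_combination (-(ellK (1 - k ^ 2) / π)) * key
end
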